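/- arXiv:1605.09160 — 2 statements merged into one kernel-verified Lean document; each statement's English description precedes it below -/
import Mathlib

section
/- For every 1 ≤ p < ∞ and integers 1 ≤ q, n, the ratio (Γ(n/p)/Γ((n+q)/p))^{1/q} is bounded above by C · (n+q)^{−1/p} for an absolute constant C > 0 (independent of n, p, q). -/
open Real

lemma wendel_aux {x s : ℝ} (hx : 0 < x) (hs : 0 < s) (hs1 : s ≤ 1) :
    Real.Gamma x * x ≤ Real.Gamma (x + s) * (x + s) ^ (1 - s) := by
  have hxs : 0 < x + s := by linarith
  have hxs1 : (0:ℝ) < x + s + 1 := by linarith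
  have hg1 : 0 < Real.Gamma (x + s) := Real.Gamma_pos_of_pos hxs
  have hgx : 0 < Real.Gamma x := Real.Gamma_pos_of_pos hx
  have key := Real.convexOn_log_Gamma.2 (Set.mem_Ioi.mpr hxs) (Set.mem_Ioi.mpr hxs1)
    hs.le (by linarith : (0:ℝ) ≤ 1 - s) (by ring)
  have harg : s • (x + s) + (1 - s) • (x + s + 1) = x + 1 := by
    simp only [smul_eq_mul]; ring
  rw [harg] at key
  simp only [Function.comp_apply] at key
  rw [Real.Gamma_add_one hx.ne', show x + s + 1 = (x + s) + 1 by ring,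
    Real.Gamma_add_one hxs.ne'] at key
  rw [Real.log_mul hxs.ne' hg1.ne'] at key
  have key2 : Real.log (Real.Gamma x * x) ≤
      Real.log (Real.Gamma (x + s) * (x + s) ^ (1 - s)) := by
    rw [Real.log_mul hg1.ne' (by positivity : ((x + s):ℝ) ^ (1 - s) ≠ 0),
      Real.log_rpow hxs, mul_comm (Real.Gamma x) x]
    simp only [smul_eq_mul] at key
    ring_nf at key ⊢
    nlinarith [key]
  exact (Real.log_le_log_iff (by positivity) (by positivity)).mp key2

lemma step_aux {s m : ℝ} (hs : 0 < s) (hs1 : s ≤ 1) (hm : 1 ≤ m) :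
    Real.Gamma (m * s) * ((m * s) ^ s * (m / (m + 1))) ≤ Real.Gamma ((m + 1) * s) := by
  have hm0 : 0 < m := by linarith
  have hms : 0 < m * s := by positivity
  have hm1s : 0 < (m + 1) * s := by positivity
  have h1 : Real.Gamma (m * s) * (m * s)
      ≤ Real.Gamma ((m + 1) * s) * ((m + 1) * s) ^ (1 - s) := by
    have := wendel_aux hms hs hs1
    rwa [show m * s + s = (m + 1) * s by ring] at this
  have e1 : m / (m + 1) ≤ (m / (m + 1)) ^ (1 - s) := by
    have h := Real.rpow_le_rpow_of_exponent_ge (show 0 < m / (m + 1) by positivity)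
      (by rw [div_le_one (by linarith)]; linarith) (show 1 - s ≤ 1 by linarith)
    rwa [Real.rpow_one] at h
  have e2 : (m / (m + 1)) ^ (1 - s) * ((m + 1) * s) ^ (1 - s) = (m * s) ^ (1 - s) := by
    rw [← Real.mul_rpow (by positivity) (by positivity)]
    congr 1
    field_simp
  have e3 : (m * s) ^ s * (m * s) ^ (1 - s) = m * s := by
    rw [← Real.rpow_add hms]
    simp
  have h2 : (m * s) ^ s * (m / (m + 1)) * ((m + 1) * s) ^ (1 - s) ≤ m * s := by
    calc (m * s) ^ s * (m / (m + 1)) * ((m + 1) * s) ^ (1 - s)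
        ≤ (m * s) ^ s * (m / (m + 1)) ^ (1 - s) * ((m + 1) * s) ^ (1 - s) := by
          have := mul_le_mul_of_nonneg_left e1 (Real.rpow_nonneg hms.le s)
          exact mul_le_mul_of_nonneg_right this (Real.rpow_nonneg hm1s.le _)
      _ = (m * s) ^ s * (m * s) ^ (1 - s) := by rw [mul_assoc, e2]
      _ = m * s := e3
  have hpos : (0:ℝ) < ((m + 1) * s) ^ (1 - s) := Real.rpow_pos_of_pos hm1s _
  have hfin : Real.Gamma (m * s) * ((m * s) ^ s * (m / (m + 1))) * ((m + 1) * s) ^ (1 - s)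
      ≤ Real.Gamma ((m + 1) * s) * ((m + 1) * s) ^ (1 - s) := by
    calc Real.Gamma (m * s) * ((m * s) ^ s * (m / (m + 1))) * ((m + 1) * s) ^ (1 - s)
        = Real.Gamma (m * s) * ((m * s) ^ s * (m / (m + 1)) * ((m + 1) * s) ^ (1 - s)) := by
          ring
      _ ≤ Real.Gamma (m * s) * (m * s) :=
          mul_le_mul_of_nonneg_left h2 (Real.Gamma_pos_of_pos hms).le
      _ ≤ Real.Gamma ((m + 1) * s) * ((m + 1) * s) ^ (1 - s) := h1
  exact le_of_mul_le_mul_right hfin hpos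

lemma tele_aux {s : ℝ} (hs : 0 < s) (hs1 : s ≤ 1) (n : ℕ) (hn : 1 ≤ n) :
    ∀ q : ℕ, Real.Gamma ((n : ℝ) * s) *
      ((∏ j ∈ Finset.range q, (((n : ℝ) + j) * s) ^ s) * ((n : ℝ) / ((n : ℝ) + q)))
      ≤ Real.Gamma (((n : ℝ) + q) * s) := by
  have hn1 : (1:ℝ) ≤ (n : ℝ) := by exact_mod_cast hn
  intro q
  induction q with
  | zero => simp [div_self (show ((n:ℝ)) ≠ 0 by linarith)]
  | succ q ih =>
    have hq0 : (0:ℝ) ≤ (q : ℝ) := Nat.cast_nonneg q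
    have hnq : (1:ℝ) ≤ (n : ℝ) + q := by linarith
    have hnq0 : (0:ℝ) < (n : ℝ) + q := by linarith
    have hstep := step_aux hs hs1 hnq
    push_cast
    have hP : (0:ℝ) ≤ ∏ j ∈ Finset.range q, (((n : ℝ) + j) * s) ^ s :=
      Finset.prod_nonneg fun j _ => Real.rpow_nonneg (by positivity) _
    calc Real.Gamma ((n : ℝ) * s) *
          ((∏ j ∈ Finset.range (q + 1), (((n : ℝ) + j) * s) ^ s) *
            ((n : ℝ) / ((n : ℝ) + (q + 1))))
        = (Real.Gamma ((n : ℝ) * s) *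
            ((∏ j ∈ Finset.range q, (((n : ℝ) + j) * s) ^ s) * ((n : ℝ) / ((n : ℝ) + q)))) *
          ((((n : ℝ) + q) * s) ^ s * (((n : ℝ) + q) / ((n : ℝ) + q + 1))) := by
          rw [Finset.prod_range_succ]
          push_cast
          field_simp
          ring
      _ ≤ Real.Gamma (((n : ℝ) + q) * s) *
          ((((n : ℝ) + q) * s) ^ s * (((n : ℝ) + q) / ((n : ℝ) + q + 1))) := by
          apply mul_le_mul_of_nonneg_right ih
          positivity
      _ ≤ Real.Gamma ((((n : ℝ) + q) + 1) * s) := hstep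
      _ = Real.Gamma (((n : ℝ) + (q + 1)) * s) := by ring_nf

lemma fact_lb_aux : ∀ q : ℕ, ((1:ℝ) + q) ^ q ≤ Real.exp 1 ^ q * (q.factorial : ℝ) := by
  intro q
  induction q with
  | zero => simp
  | succ q ih =>
    have hr : (0:ℝ) < 1 + (q : ℝ) := by positivity
    have h1 : (1 + (q : ℝ)) + 1 ≤ (1 + q) * Real.exp (1 / (1 + (q : ℝ))) := by
      have := Real.add_one_le_exp (1 / (1 + (q : ℝ)))
      have h2 := mul_le_mul_of_nonneg_left this hr.le
      calc (1 + (q : ℝ)) + 1 = (1 + (q : ℝ)) * (1 / (1 + (q : ℝ)) + 1) := by field_simp; ring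
        _ ≤ (1 + q) * Real.exp (1 / (1 + (q : ℝ))) := h2
    have h3 : ((1 + (q : ℝ)) + 1) ^ (q + 1)
        ≤ ((1 + (q : ℝ)) * Real.exp (1 / (1 + (q : ℝ)))) ^ (q + 1) :=
      pow_le_pow_left₀ (by positivity) h1 (q + 1)
    have h4 : ((1 + (q : ℝ)) * Real.exp (1 / (1 + (q : ℝ)))) ^ (q + 1)
        = (1 + (q : ℝ)) ^ (q + 1) * Real.exp 1 := by
      rw [mul_pow, ← Real.exp_nat_mul]
      congr 2
      push_cast
      field_simp
      ring
    have h5 : (1 + (q : ℝ)) ^ (q + 1) * Real.exp 1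
        ≤ Real.exp 1 ^ (q + 1) * ((q + 1).factorial : ℝ) := by
      have h6 : (1 + (q : ℝ)) ^ (q + 1) = (1 + (q : ℝ)) * (1 + (q : ℝ)) ^ q := by ring
      rw [h6, Nat.factorial_succ]
      push_cast
      have h7 := mul_le_mul_of_nonneg_left ih (by positivity : (0:ℝ) ≤ (1 + (q:ℝ)) * Real.exp 1)
      calc (1 + (q : ℝ)) * (1 + (q : ℝ)) ^ q * Real.exp 1
          = (1 + (q : ℝ)) * Real.exp 1 * (1 + (q : ℝ)) ^ q := by ring
        _ ≤ (1 + (q : ℝ)) * Real.exp 1 * (Real.exp 1 ^ q * (q.factorial : ℝ)) := h7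
        _ = Real.exp 1 ^ (q + 1) * (((q : ℝ) + 1) * (q.factorial : ℝ)) := by ring
    calc ((1:ℝ) + (q + 1 : ℕ)) ^ (q + 1) = ((1 + (q : ℝ)) + 1) ^ (q + 1) := by push_cast; ring_nf
      _ ≤ (1 + (q : ℝ)) ^ (q + 1) * Real.exp 1 := h3.trans_eq h4
      _ ≤ Real.exp 1 ^ (q + 1) * ((q + 1).factorial : ℝ) := h5

lemma prod_lb_aux {s : ℝ} (hs : 0 < s) (hs1 : s ≤ 1) (n q : ℕ) (hn : 1 ≤ n) :
    (((((n : ℝ) + q) * s / Real.exp 1) ^ q)) ^ s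
      ≤ ∏ j ∈ Finset.range q, (((n : ℝ) + j) * s) ^ s := by
  have hn1 : (1:ℝ) ≤ (n : ℝ) := by exact_mod_cast hn
  have hq1 : (0:ℝ) < 1 + (q : ℝ) := by positivity
  set A : ℝ := ((n : ℝ) + q) * s / (1 + q) with hA
  have hApos : 0 < A := by positivity
  have h1 : ∀ j ∈ Finset.range q,
      (A * (1 + (j : ℝ))) ^ s ≤ (((n : ℝ) + j) * s) ^ s := by
    intro j hj
    have hjq : (j : ℝ) ≤ (q : ℝ) := by
      exact_mod_cast (Finset.mem_range.mp hj).le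
    apply Real.rpow_le_rpow (by positivity) ?_ hs.le
    rw [hA, div_mul_eq_mul_div, div_le_iff₀ hq1]
    nlinarith [mul_nonneg (mul_nonneg hs.le (sub_nonneg.mpr hn1)) (sub_nonneg.mpr hjq)]
  have h2 : (∏ j ∈ Finset.range q, (A * (1 + (j : ℝ)))) ^ s
      = ∏ j ∈ Finset.range q, (A * (1 + (j : ℝ))) ^ s :=
    (Real.finset_prod_rpow _ _ (fun j _ => by positivity) s).symm
  have h3 : ∏ j ∈ Finset.range q, (A * (1 + (j : ℝ))) = A ^ q * (q.factorial : ℝ) := by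
    rw [Finset.prod_mul_distrib, Finset.prod_const, Finset.card_range]
    congr 1
    rw [← Finset.prod_range_add_one_eq_factorial q]
    push_cast
    exact Finset.prod_congr rfl fun j _ => by ring
  have h4 : (((n : ℝ) + q) * s / Real.exp 1) ^ q ≤ A ^ q * (q.factorial : ℝ) := by
    have he : ((n : ℝ) + q) * s / Real.exp 1 = A * ((1 + q) / Real.exp 1) := by
      rw [hA]; field_simp
    rw [he, mul_pow]
    apply mul_le_mul_of_nonneg_left ?_ (by positivity)
    rw [div_pow, div_le_iff₀ (by positivity)]
    have := fact_lb_aux q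
    linarith
  calc ((((n : ℝ) + q) * s / Real.exp 1) ^ q) ^ s
      ≤ (A ^ q * (q.factorial : ℝ)) ^ s := Real.rpow_le_rpow (by positivity) h4 hs.le
    _ = (∏ j ∈ Finset.range q, (A * (1 + (j : ℝ)))) ^ s := by rw [h3]
    _ = ∏ j ∈ Finset.range q, (A * (1 + (j : ℝ))) ^ s := h2
    _ ≤ ∏ j ∈ Finset.range q, (((n : ℝ) + j) * s) ^ s :=
        Finset.prod_le_prod (fun j _ => by positivity) h1

theorem stmt_9 : ∃ C : ℝ, 0 < C ∧ ∀ (p : ℝ), 1 ≤ p → ∀ q n : ℕ, 1 ≤ q → 1 ≤ n →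
    (Real.Gamma (n / p) / Real.Gamma ((n + q) / p)) ^ ((1 : ℝ) / q)
      ≤ C * ((n : ℝ) + q) ^ (-(1 / p)) := by
  refine ⟨2 * Real.exp 1, by positivity, fun p hp q n hq hn => ?_⟩
  have hp0 : 0 < p := lt_of_lt_of_le one_pos hp
  set s : ℝ := 1 / p with hs_def
  have hs : 0 < s := by positivity
  have hs1 : s ≤ 1 := by rw [hs_def, div_le_one hp0]; exact hp
  have hn1 : (1:ℝ) ≤ (n : ℝ) := by exact_mod_cast hn
  have hq1 : (1:ℝ) ≤ (q : ℝ) := by exact_mod_cast hq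
  have hq0 : ((q : ℝ)) ≠ 0 := by linarith
  have hnq0 : (0:ℝ) < (n : ℝ) + q := by linarith
  have hrw1 : (n : ℝ) / p = (n : ℝ) * s := by rw [hs_def, mul_one_div]
  have hrw2 : ((n : ℝ) + q) / p = ((n : ℝ) + q) * s := by rw [hs_def, mul_one_div]
  rw [hrw1, hrw2]
  have hG : 0 < Real.Gamma ((n : ℝ) * s) := Real.Gamma_pos_of_pos (by positivity)
  have hH : 0 < Real.Gamma (((n : ℝ) + q) * s) := Real.Gamma_pos_of_pos (by positivity)
  set G := Real.Gamma ((n : ℝ) * s)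
  set H := Real.Gamma (((n : ℝ) + q) * s)
  set P : ℝ := ∏ j ∈ Finset.range q, (((n : ℝ) + j) * s) ^ s with hP_def
  have hPpos : 0 < P :=
    Finset.prod_pos fun j _ => Real.rpow_pos_of_pos (by positivity) _
  have htele : G * (P * ((n : ℝ) / ((n : ℝ) + q))) ≤ H := tele_aux hs hs1 n hn q
  -- lower bound on P
  have hPlb : ((n : ℝ) + q) ^ ((q : ℝ) * s) * Real.exp (-(q : ℝ)) ≤ P := by
    have hprod := prod_lb_aux hs hs1 n q hn
    have hx : (0:ℝ) ≤ ((n : ℝ) + q) * s / Real.exp 1 := by positivity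
    have e1 : ((((n : ℝ) + q) * s / Real.exp 1) ^ q) ^ s
        = (((n : ℝ) + q) * s / Real.exp 1) ^ ((q : ℝ) * s) := by
      rw [← Real.rpow_natCast (((n : ℝ) + q) * s / Real.exp 1) q, ← Real.rpow_mul hx]
    have e2 : (((n : ℝ) + q) * s / Real.exp 1) ^ ((q : ℝ) * s)
        = ((n : ℝ) + q) ^ ((q : ℝ) * s) * (s / Real.exp 1) ^ ((q : ℝ) * s) := by
      rw [mul_div_assoc, Real.mul_rpow (by positivity) (by positivity)]
    have e3 : Real.exp (-(q : ℝ)) ≤ (s / Real.exp 1) ^ ((q : ℝ) * s) := by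
      rw [Real.rpow_def_of_pos (by positivity)]
      apply Real.exp_le_exp.mpr
      rw [Real.log_div hs.ne' (Real.exp_ne_zero 1), Real.log_exp]
      have hlog : 1 - 1 / s ≤ Real.log s := by
        have h := Real.log_le_sub_one_of_pos (show (0:ℝ) < s⁻¹ by positivity)
        rw [Real.log_inv] at h
        have : s⁻¹ = 1 / s := by rw [one_div]
        linarith [h, this ▸ h]
      have hkey : s - 1 ≤ s * Real.log s := by
        have := mul_le_mul_of_nonneg_left hlog hs.le
        have hss : s * (1 - 1 / s) = s - 1 := by field_simp
        linarith [hss ▸ this]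
      nlinarith [hq1, hkey]
    calc ((n : ℝ) + q) ^ ((q : ℝ) * s) * Real.exp (-(q : ℝ))
        ≤ ((n : ℝ) + q) ^ ((q : ℝ) * s) * (s / Real.exp 1) ^ ((q : ℝ) * s) :=
          mul_le_mul_of_nonneg_left e3 (Real.rpow_nonneg hnq0.le _)
      _ = ((((n : ℝ) + q) * s / Real.exp 1) ^ q) ^ s := by rw [e2.symm, e1.symm]
      _ ≤ P := hprod
  set B : ℝ := 2 * Real.exp 1 * ((n : ℝ) + q) ^ (-s) with hB_def
  have hBpos : 0 < B := by
    apply mul_pos (by positivity) (Real.rpow_pos_of_pos hnq0 _)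
  -- key : G / H ≤ B ^ q
  have hGH : G / H ≤ B ^ q := by
    rw [div_le_iff₀ hH]
    set K : ℝ := ((n : ℝ) + q) ^ ((q : ℝ) * s) * Real.exp (-(q : ℝ)) * ((n : ℝ) / ((n : ℝ) + q))
      with hK_def
    have hKpos : 0 < K := by
      apply mul_pos (mul_pos (Real.rpow_pos_of_pos hnq0 _) (Real.exp_pos _))
      positivity
    have hHK : G * K ≤ H := by
      calc G * K ≤ G * (P * ((n : ℝ) / ((n : ℝ) + q))) := by
            rw [hK_def]
            apply mul_le_mul_of_nonneg_left ?_ hG.le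
            exact mul_le_mul_of_nonneg_right hPlb (by positivity)
        _ ≤ H := htele
    have hBK : 1 ≤ B ^ q * K := by
      have e4 : B ^ q = 2 ^ q * Real.exp 1 ^ q * (((n : ℝ) + q) ^ (-s)) ^ q := by
        rw [hB_def]; ring
      have e5 : (((n : ℝ) + q) ^ (-s)) ^ q = ((n : ℝ) + q) ^ (-s * (q : ℝ)) := by
        rw [← Real.rpow_natCast (((n : ℝ) + q) ^ (-s)) q, ← Real.rpow_mul hnq0.le]
      have e6 : ((n : ℝ) + q) ^ (-s * (q : ℝ)) * ((n : ℝ) + q) ^ ((q : ℝ) * s) = 1 := by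
        rw [← Real.rpow_add hnq0]
        rw [show -s * (q : ℝ) + (q : ℝ) * s = 0 by ring, Real.rpow_zero]
      have e7 : Real.exp 1 ^ q * Real.exp (-(q : ℝ)) = 1 := by
        rw [← Real.exp_nat_mul, ← Real.exp_add]
        rw [show (q : ℝ) * 1 + -(q : ℝ) = 0 by ring, Real.exp_zero]
      have e8 : B ^ q * K = 2 ^ q * ((n : ℝ) / ((n : ℝ) + q)) := by
        rw [e4, e5, hK_def]
        calc 2 ^ q * Real.exp 1 ^ q * ((n : ℝ) + q) ^ (-s * (q : ℝ)) *
              (((n : ℝ) + q) ^ ((q : ℝ) * s) * Real.exp (-(q : ℝ)) *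
                ((n : ℝ) / ((n : ℝ) + q)))
            = 2 ^ q * (Real.exp 1 ^ q * Real.exp (-(q : ℝ))) *
              (((n : ℝ) + q) ^ (-s * (q : ℝ)) * ((n : ℝ) + q) ^ ((q : ℝ) * s)) *
              ((n : ℝ) / ((n : ℝ) + q)) := by ring
          _ = 2 ^ q * ((n : ℝ) / ((n : ℝ) + q)) := by rw [e6, e7]; ring
      rw [e8]
      rw [show (1:ℝ) = ((n : ℝ) + q) / ((n : ℝ) + q) by rw [div_self hnq0.ne']]
      rw [div_le_iff₀ hnq0, mul_assoc, div_mul_cancel₀ _ hnq0.ne']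
      have h2q : (q : ℝ) + 1 ≤ 2 ^ q := by
        have := Nat.lt_two_pow_self (n := q)
        have h := Nat.succ_le_of_lt this
        calc (q : ℝ) + 1 = ((q + 1 : ℕ) : ℝ) := by push_cast; ring
          _ ≤ ((2 ^ q : ℕ) : ℝ) := by exact_mod_cast h
          _ = 2 ^ q := by push_cast; ring
      nlinarith [h2q, hn1]
    calc G = G * 1 := by ring
      _ ≤ G * (B ^ q * K) := mul_le_mul_of_nonneg_left hBK hG.le
      _ = B ^ q * (G * K) := by ring
      _ ≤ B ^ q * H := mul_le_mul_of_nonneg_left hHK (by positivity)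
  -- conclude
  have hmono := Real.rpow_le_rpow (div_nonneg hG.le hH.le) hGH
    (by positivity : (0:ℝ) ≤ 1 / q)
  have hBq : (B ^ q) ^ ((1:ℝ) / q) = B := by
    rw [← Real.rpow_natCast B q, ← Real.rpow_mul hBpos.le]
    rw [mul_one_div, div_self hq0, Real.rpow_one]
  rw [hBq] at hmono
  exact hmono
end

section
/- There exists an absolute constant C > 0 such that for all integers q ≥ 1, n ≥ 1 and all real p ≥ 2: n^{2q/p} · (2√(2q))^{2q} · √q · Γ(n/p) / (q! · Γ((n+2q)/p)) ≤ C · (32 e³)^q. -/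
open Real

/-- Fractional step: for `y ≥ 1` and `0 ≤ t ≤ 1`, `Γ(y) y^t ≤ 2 Γ(y+t)`. -/
lemma gamma_frac_step {y t : ℝ} (hy : 1 ≤ y) (ht0 : 0 ≤ t) (ht1 : t ≤ 1) :
    Real.Gamma y * y ^ t ≤ 2 * Real.Gamma (y + t) := by
  have hy0 : 0 < y := lt_of_lt_of_le one_pos hy
  have hyt : 0 < y + t := by linarith
  have hG : 0 < Real.Gamma (y + t) := Real.Gamma_pos_of_pos hyt
  have hGy : 0 < Real.Gamma y := Real.Gamma_pos_of_pos hy0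
  rcases eq_or_lt_of_le ht0 with h0 | h0
  · rw [← h0, Real.rpow_zero, mul_one, add_zero]
    nlinarith
  rcases eq_or_lt_of_le ht1 with h1 | h1
  · subst h1
    rw [Real.rpow_one, Real.Gamma_add_one hy0.ne']
    nlinarith
  -- now 0 < t < 1
  have key : Real.Gamma (y + 1) ≤
      Real.Gamma (y + t) ^ t * Real.Gamma (y + 1 + t) ^ (1 - t) := by
    have h := Real.Gamma_mul_add_mul_le_rpow_Gamma_mul_rpow_Gamma
      (s := y + t) (t := y + 1 + t) (a := t) (b := 1 - t)
      hyt (by linarith) h0 (by linarith) (by ring)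
    have e : t * (y + t) + (1 - t) * (y + 1 + t) = y + 1 := by ring
    rwa [e] at h
  have hGadd : Real.Gamma (y + 1 + t) = (y + t) * Real.Gamma (y + t) := by
    rw [show y + 1 + t = (y + t) + 1 by ring, Real.Gamma_add_one hyt.ne']
  have key2 : Real.Gamma (y + 1) ≤ Real.Gamma (y + t) * (y + t) ^ (1 - t) := by
    calc Real.Gamma (y + 1) ≤ Real.Gamma (y + t) ^ t * Real.Gamma (y + 1 + t) ^ (1 - t) := key
      _ = Real.Gamma (y + t) ^ t * ((y + t) ^ (1 - t) * Real.Gamma (y + t) ^ (1 - t)) := by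
          rw [hGadd, Real.mul_rpow hyt.le hG.le]
      _ = (Real.Gamma (y + t) ^ t * Real.Gamma (y + t) ^ (1 - t)) * (y + t) ^ (1 - t) := by
          ring
      _ = Real.Gamma (y + t) * (y + t) ^ (1 - t) := by
          rw [← Real.rpow_add hG]
          norm_num
  have hstep : (y + t) ^ (1 - t) ≤ 2 * y ^ (1 - t) := by
    calc (y + t) ^ (1 - t) ≤ (2 * y) ^ (1 - t) :=
          Real.rpow_le_rpow hyt.le (by linarith) (by linarith)
      _ = 2 ^ (1 - t) * y ^ (1 - t) := Real.mul_rpow (by norm_num) hy0.le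
      _ ≤ 2 ^ (1 : ℝ) * y ^ (1 - t) := by
          gcongr
          · norm_num
          · linarith
      _ = 2 * y ^ (1 - t) := by norm_num
  have key3 : Real.Gamma y * y ≤ 2 * Real.Gamma (y + t) * y ^ (1 - t) := by
    have h2 : Real.Gamma (y + 1) = y * Real.Gamma y := Real.Gamma_add_one hy0.ne'
    calc Real.Gamma y * y = Real.Gamma (y + 1) := by rw [h2]; ring
      _ ≤ Real.Gamma (y + t) * (y + t) ^ (1 - t) := key2
      _ ≤ Real.Gamma (y + t) * (2 * y ^ (1 - t)) := by gcongr
      _ = 2 * Real.Gamma (y + t) * y ^ (1 - t) := by ring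
  have hpos : (0 : ℝ) < y ^ (1 - t) := Real.rpow_pos_of_pos hy0 _
  rw [← mul_le_mul_iff_of_pos_right hpos]
  calc Real.Gamma y * y ^ t * y ^ (1 - t) = Real.Gamma y * y ^ (t + (1 - t)) := by
        rw [Real.rpow_add hy0]; ring
    _ = Real.Gamma y * y := by norm_num
    _ ≤ 2 * Real.Gamma (y + t) * y ^ (1 - t) := key3

/-- Integer step: `Γ(y) y^k ≤ Γ(y+k)` for `y > 0`. -/
lemma gamma_int_step {y : ℝ} (hy : 0 < y) (k : ℕ) :
    Real.Gamma y * y ^ k ≤ Real.Gamma (y + k) := by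
  induction k with
  | zero => simp
  | succ k ih =>
    have hyk : (0 : ℝ) < y + k := by positivity
    have hG : Real.Gamma (y + (k + 1 : ℕ)) = (y + k) * Real.Gamma (y + k) := by
      push_cast
      rw [show y + ((k : ℝ) + 1) = (y + k) + 1 by ring, Real.Gamma_add_one hyk.ne']
    have hGk : 0 ≤ Real.Gamma (y + k) := (Real.Gamma_pos_of_pos hyk).le
    have hGy : 0 ≤ Real.Gamma y := (Real.Gamma_pos_of_pos hy).le
    calc Real.Gamma y * y ^ (k + 1) = (Real.Gamma y * y ^ k) * y := by ring
      _ ≤ Real.Gamma (y + k) * y :=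
          mul_le_mul_of_nonneg_right ih hy.le
      _ ≤ Real.Gamma (y + k) * (y + k) :=
          mul_le_mul_of_nonneg_left (le_add_of_nonneg_right (by positivity)) hGk
      _ = Real.Gamma (y + (k + 1 : ℕ)) := by rw [hG]; ring

/-- General step: for `y ≥ 1`, `a ≥ 0`, `Γ(y) y^a ≤ 2 Γ(y+a)`. -/
lemma gamma_gen_step {y a : ℝ} (hy : 1 ≤ y) (ha : 0 ≤ a) :
    Real.Gamma y * y ^ a ≤ 2 * Real.Gamma (y + a) := by
  have hy0 : 0 < y := lt_of_lt_of_le one_pos hy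
  set k : ℕ := ⌊a⌋₊ with hk
  set t : ℝ := a - k with htdef
  have hkt : a = k + t := by rw [htdef]; ring
  have ht0 : 0 ≤ t := by
    have := Nat.floor_le ha
    rw [htdef]; linarith
  have ht1 : t ≤ 1 := by
    have := Nat.lt_floor_add_one a
    rw [htdef]; push_cast at this ⊢; linarith
  have h1 : Real.Gamma (y + k) * (y + k) ^ t ≤ 2 * Real.Gamma ((y + k) + t) :=
    gamma_frac_step (hy.trans (le_add_of_nonneg_right (by positivity))) ht0 ht1
  have h2 : Real.Gamma y * y ^ (k : ℕ) ≤ Real.Gamma (y + k) := gamma_int_step hy0 k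
  have hGy : 0 ≤ Real.Gamma y := (Real.Gamma_pos_of_pos hy0).le
  calc Real.Gamma y * y ^ a = (Real.Gamma y * y ^ (k : ℕ)) * y ^ t := by
        rw [hkt, Real.rpow_add hy0, Real.rpow_natCast]; ring
    _ ≤ Real.Gamma (y + k) * y ^ t :=
        mul_le_mul_of_nonneg_right h2 (by positivity)
    _ ≤ Real.Gamma (y + k) * (y + k) ^ t :=
        mul_le_mul_of_nonneg_left
          (Real.rpow_le_rpow hy0.le (le_add_of_nonneg_right (by positivity)) ht0)
          (Real.Gamma_pos_of_pos (by positivity)).le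
    _ ≤ 2 * Real.Gamma ((y + k) + t) := h1
    _ = 2 * Real.Gamma (y + a) := by rw [hkt]; ring_nf

theorem stmt_13 : ∃ C : ℝ, 0 < C ∧ ∀ q n : ℕ, 1 ≤ q → 1 ≤ n → ∀ p : ℝ, 2 ≤ p →
    (n : ℝ) ^ (2 * q / p) * (2 * Real.sqrt (2 * q)) ^ (2 * q) * Real.sqrt q *
        Real.Gamma (n / p) / ((Nat.factorial q) * Real.Gamma ((n + 2 * q) / p))
      ≤ C * (32 * Real.exp 3) ^ q := by
  refine ⟨6, by norm_num, ?_⟩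
  intro q n hq hn p hp
  have hp0 : (0 : ℝ) < p := by linarith
  have hq1 : (1 : ℝ) ≤ q := by exact_mod_cast hq
  have hn1 : (1 : ℝ) ≤ n := by exact_mod_cast hn
  set x : ℝ := (n : ℝ) / p with hxdef
  set a : ℝ := 2 * (q : ℝ) / p with hadef
  have hx0 : 0 < x := by rw [hxdef]; positivity
  have ha0 : 0 < a := by rw [hadef]; positivity
  have hGx : 0 < Real.Gamma x := Real.Gamma_pos_of_pos hx0
  have hGxa : 0 < Real.Gamma (x + a) := Real.Gamma_pos_of_pos (by positivity)
  have hfac : (0 : ℝ) < (Nat.factorial q : ℝ) := by positivity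
  have hsplit : ((n : ℝ) + 2 * q) / p = x + a := by rw [hxdef, hadef]; ring
  rw [hsplit, div_le_iff₀ (by positivity)]
  -- Core Gamma ratio bound: x^a * Γ x ≤ 2(1+2q) Γ(x+a)
  have hA : x ^ a * Real.Gamma x ≤ 2 * (1 + 2 * q) * Real.Gamma (x + a) := by
    have h1 : Real.Gamma (x + 1) * (x + 1) ^ a ≤ 2 * Real.Gamma ((x + 1) + a) :=
      gamma_gen_step (by linarith) ha0.le
    have h2 : Real.Gamma (x + 1) = x * Real.Gamma x := Real.Gamma_add_one hx0.ne'
    have h3 : Real.Gamma ((x + 1) + a) = (x + a) * Real.Gamma (x + a) := by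
      rw [show (x + 1) + a = (x + a) + 1 by ring, Real.Gamma_add_one (by positivity)]
    have h4 : x ^ a ≤ (x + 1) ^ a := Real.rpow_le_rpow hx0.le (by linarith) ha0.le
    have h5 : a ≤ a * n := le_mul_of_one_le_right ha0.le hn1
    have h6 : a * n = 2 * q * x := by rw [hadef, hxdef]; ring
    have h7 : x + a ≤ x * (1 + 2 * q) := by nlinarith
    have key : x * (Real.Gamma x * (x + 1) ^ a) ≤ x * (2 * (1 + 2 * q) * Real.Gamma (x + a)) := by
      calc x * (Real.Gamma x * (x + 1) ^ a) = Real.Gamma (x + 1) * (x + 1) ^ a := by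
            rw [h2]; ring
        _ ≤ 2 * Real.Gamma ((x + 1) + a) := h1
        _ = 2 * ((x + a) * Real.Gamma (x + a)) := by rw [h3]
        _ ≤ 2 * ((x * (1 + 2 * q)) * Real.Gamma (x + a)) := by gcongr
        _ = x * (2 * (1 + 2 * q) * Real.Gamma (x + a)) := by ring
    have key2 : Real.Gamma x * (x + 1) ^ a ≤ 2 * (1 + 2 * q) * Real.Gamma (x + a) :=
      le_of_mul_le_mul_left key hx0
    calc x ^ a * Real.Gamma x ≤ (x + 1) ^ a * Real.Gamma x := by gcongr
      _ = Real.Gamma x * (x + 1) ^ a := by ring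
      _ ≤ 2 * (1 + 2 * q) * Real.Gamma (x + a) := key2
  -- n^a = x^a * p^a
  have hB : (n : ℝ) ^ a = x ^ a * p ^ a := by
    rw [show (n : ℝ) = x * p by rw [hxdef]; field_simp]
    exact Real.mul_rpow hx0.le hp0.le
  -- p^a ≤ exp (2q)
  have hC : p ^ a ≤ Real.exp (2 * q) := by
    rw [Real.rpow_def_of_pos hp0]
    apply Real.exp_le_exp.2
    have hlog : Real.log p ≤ p := (Real.log_le_sub_one_of_pos hp0).trans (by linarith)
    have hdiv : Real.log p / p ≤ 1 := (div_le_one hp0).2 hlog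
    have : Real.log p * a = 2 * q * (Real.log p / p) := by rw [hadef]; ring
    rw [this]
    nlinarith
  -- (2 √(2q))^(2q) = 8^q * q^q
  have hD : (2 * Real.sqrt (2 * q)) ^ (2 * q) = 8 ^ q * (q : ℝ) ^ q := by
    rw [pow_mul, show (2 * Real.sqrt (2 * (q : ℝ))) ^ 2 = 8 * q by
      rw [mul_pow, Real.sq_sqrt (by positivity)]; ring]
    rw [mul_pow]
  -- q^q ≤ exp q * q!
  have hE : (q : ℝ) ^ q ≤ Real.exp q * (Nat.factorial q : ℝ) := by
    have h := Real.pow_div_factorial_le_exp (x := (q : ℝ)) (by positivity) q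
    rw [div_le_iff₀ hfac] at h
    linarith
  -- sqrt q ≤ q
  have hF : Real.sqrt q ≤ (q : ℝ) := by
    have h := Real.sqrt_le_sqrt (show (q : ℝ) ≤ (q : ℝ) ^ 2 by nlinarith)
    rwa [Real.sqrt_sq (by positivity)] at h
  -- q ≤ 2^q hence q^2 ≤ 4^q
  have hq2 : (q : ℝ) ≤ 2 ^ q := by
    have := (Nat.lt_two_pow_self (n := q)).le
    exact_mod_cast this
  have h4q : (q : ℝ) ^ 2 ≤ 4 ^ q := by
    calc (q : ℝ) ^ 2 ≤ ((2 : ℝ) ^ q) ^ 2 := by gcongr <;> positivity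
      _ = 4 ^ q := by rw [← pow_mul, mul_comm, pow_mul]; norm_num
  calc (n : ℝ) ^ a * (2 * Real.sqrt (2 * q)) ^ (2 * q) * Real.sqrt q * Real.Gamma x
      = p ^ a * (8 ^ q * (q : ℝ) ^ q) * Real.sqrt q * (x ^ a * Real.Gamma x) := by
        rw [hB, hD]; ring
    _ ≤ Real.exp (2 * q) * (8 ^ q * (Real.exp q * (Nat.factorial q : ℝ))) * (q : ℝ) *
          (2 * (1 + 2 * q) * Real.Gamma (x + a)) := by
        gcongr
        all_goals first | exact hC | exact hE | exact hF | exact hA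
    _ = (2 * q * (1 + 2 * q)) * 8 ^ q * Real.exp (3 * q) * ((Nat.factorial q : ℝ) *
          Real.Gamma (x + a)) := by
        rw [show (3 : ℝ) * q = 2 * q + q by ring, Real.exp_add]; ring
    _ ≤ (6 * 4 ^ q) * 8 ^ q * Real.exp (3 * q) * ((Nat.factorial q : ℝ) *
          Real.Gamma (x + a)) := by
        have : 2 * (q : ℝ) * (1 + 2 * q) ≤ 6 * 4 ^ q := by nlinarith
        gcongr
    _ = 6 * (32 * Real.exp 3) ^ q * ((Nat.factorial q : ℝ) * Real.Gamma (x + a)) := by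
        rw [mul_pow, show (32 : ℝ) ^ q = 4 ^ q * 8 ^ q by
          rw [show (32 : ℝ) = 4 * 8 by norm_num, mul_pow],
          show Real.exp 3 ^ q = Real.exp (3 * q) by rw [← Real.exp_nat_mul]; ring_nf]
        ring
end
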